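/- Let H be an exponentially distributed random variable with rate 1. Then for every real h_b ≥ 0 and every integer i ≥ 1, the probability P[ P_U·d_UB^{−α}·h_b / (N_0 + 2^{i−1}·P_S·d_SB^{−α}·H) < θ ] equals min(exp(−(γ_UB·h_b − θ)/(θ·2^{i−1}·γ_SB)), 1). -/

import Mathlib

open Real MeasureTheory ProbabilityTheory
open Set


lemma expIic (x : ℝ) : (expMeasure 1) (Iic x) =
    ENNReal.ofReal (if 0 ≤ x then 1 - Real.exp (-x) else 0) := by
  have : IsProbabilityMeasure (expMeasure 1) := isProbabilityMeasure_expMeasure one_pos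
  rw [← ofReal_cdf]
  have := cdf_expMeasure_eq (r := 1) one_pos x
  simp only [one_mul] at this
  rw [this]

lemma expIoi (t : ℝ) : (expMeasure 1) (Ioi t) =
    ENNReal.ofReal (min (Real.exp (-t)) 1) := by
  have hp : IsProbabilityMeasure (expMeasure 1) := isProbabilityMeasure_expMeasure one_pos
  have := prob_compl_eq_one_sub (μ := expMeasure 1) (measurableSet_Iic (a := t))
  rw [compl_Iic] at this
  rw [this, expIic]
  by_cases h : 0 ≤ t
  · rw [if_pos h]
    have h1 : Real.exp (-t) ≤ 1 := by rw [Real.exp_le_one_iff]; linarith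
    rw [min_eq_left h1, ENNReal.ofReal_sub _ (by positivity), ENNReal.ofReal_one]
    rw [ENNReal.sub_sub_cancel (by simp) (by simp [h1])]
  · rw [if_neg h, min_eq_right (Real.one_le_exp (by linarith : (0:ℝ) ≤ -t))]
    simp

/-- For `H` exponentially distributed with rate 1, for every `h_b ≥ 0` and
integer `i ≥ 1`,
`P[ P_U·d_UB^{−α}·h_b / (N_0 + 2^{i−1}·P_S·d_SB^{−α}·H) < θ ]
  = min(exp(−(γ_UB·h_b − θ)/(θ·2^{i−1}·γ_SB)), 1)`,
where `γ_SB = P_S·d_SB^{−α}/N_0` and `γ_UB = P_U·d_UB^{−α}/N_0`. -/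
theorem stmt1 (P_S P_U N₀ d_SB d_UB α θ : ℝ)
    (hPS : 0 < P_S) (hPU : 0 < P_U) (hN0 : 0 < N₀) (hdSB : 0 < d_SB) (hdUB : 0 < d_UB)
    (hα : 0 < α) (hθ : 0 < θ)
    (γSB γUB : ℝ)
    (hγSB : γSB = P_S * d_SB ^ (-α) / N₀)
    (hγUB : γUB = P_U * d_UB ^ (-α) / N₀) :
    ∀ h_b : ℝ, 0 ≤ h_b → ∀ i : ℕ, 1 ≤ i →
      (expMeasure 1)
        {h : ℝ | P_U * d_UB ^ (-α) * h_b / (N₀ + 2 ^ (i - 1) * P_S * d_SB ^ (-α) * h) < θ}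
        = ENNReal.ofReal
            (min (Real.exp (-(γUB * h_b - θ) / (θ * 2 ^ (i - 1) * γSB))) 1) := by
  intro h_b hb i hi
  set c : ℝ := 2 ^ (i - 1) * P_S * d_SB ^ (-α) with hc
  have hcpos : 0 < c := by positivity
  set A : ℝ := P_U * d_UB ^ (-α) * h_b with hA
  set t : ℝ := (A - θ * N₀) / (θ * c) with ht
  have hSB : 0 < d_SB ^ (-α) := by positivity
  have hUB : 0 < d_UB ^ (-α) := by positivity
  have hγSBpos : 0 < γSB := by rw [hγSB]; positivity
  -- exponent equality
  have hexp : -(γUB * h_b - θ) / (θ * 2 ^ (i - 1) * γSB) = -t := by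
    rw [ht, hγSB, hγUB, hA, hc]
    field_simp
  rw [hexp]
  -- set decomposition
  have hset : {h : ℝ | A / (N₀ + c * h) < θ} ∩ Ioi 0 = Ioi (max t 0) := by
    ext h
    simp only [mem_inter_iff, mem_setOf_eq, mem_Ioi, max_lt_iff]
    constructor
    · rintro ⟨h1, h2⟩
      refine ⟨?_, h2⟩
      have hD : 0 < N₀ + c * h := by positivity
      rw [div_lt_iff₀ hD] at h1
      rw [ht, div_lt_iff₀ (by positivity)]
      nlinarith
    · rintro ⟨h1, h2⟩
      refine ⟨?_, h2⟩
      have hD : 0 < N₀ + c * h := by positivity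
      rw [div_lt_iff₀ hD]
      rw [ht, div_lt_iff₀ (by positivity)] at h1
      nlinarith
  have hnull : (expMeasure 1) ({h : ℝ | A / (N₀ + c * h) < θ} ∩ Iic 0) = 0 := by
    refine measure_mono_null (inter_subset_right) ?_
    have := expIic 0
    simpa using this
  calc (expMeasure 1) {h : ℝ | A / (N₀ + c * h) < θ}
      = (expMeasure 1) (({h : ℝ | A / (N₀ + c * h) < θ} ∩ Ioi 0)
          ∪ ({h : ℝ | A / (N₀ + c * h) < θ} ∩ Iic 0)) := by
        congr 1
        rw [← inter_union_distrib_left, union_comm, Iic_union_Ioi, inter_univ]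
    _ = (expMeasure 1) ({h : ℝ | A / (N₀ + c * h) < θ} ∩ Ioi 0) :=
        le_antisymm ((measure_union_le _ _).trans (by rw [hnull, add_zero]))
          (measure_mono subset_union_left)
    _ = (expMeasure 1) (Ioi (max t 0)) := by rw [hset]
    _ = ENNReal.ofReal (min (Real.exp (-(max t 0))) 1) := expIoi _
    _ = ENNReal.ofReal (min (Real.exp (-t)) 1) := by
        rcases le_total t 0 with h | h
        · rw [max_eq_right h, neg_zero, Real.exp_zero, min_self,
            min_eq_right (Real.one_le_exp (by linarith : (0:ℝ) ≤ -t))]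
        · rw [max_eq_left h]
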